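/- Let c ≥ 0 be an integer and let ε > 0 be real. For every sufficiently large natural number n the following hold, where X_n is the set of vectors in (ZMod 2)^(n+1) with first coordinate 0 and Hamming weight greater than n − c, and Y_n is the set of vectors in (ZMod 2)^(n+1) with first coordinate 1 and Hamming weight at most (n − c)/2: the set X_n ∪ Y_n is triangle-free, does not contain 0, spans (ZMod 2)^(n+1), has critical number exactly c + 1, and satisfies |X_n ∪ Y_n| ≥ (1/4 − ε)·2^(n+1). -/

import Mathlib

/-- Hamming weight of a vector over `ZMod 2`. -/
def hWt {m : ℕ} (x : Fin m → ZMod 2) : ℕ :=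
  (Finset.univ.filter fun i => x i ≠ 0).card

/-- `X` is triangle-free: no three pairwise distinct elements of `X` sum to zero. -/
def TriangleFree {n : ℕ} (X : Set (Fin n → ZMod 2)) : Prop :=
  ∀ x ∈ X, ∀ y ∈ X, ∀ z ∈ X, x ≠ y → y ≠ z → x ≠ z → x + y + z ≠ 0

/-- The critical number of `X ⊆ (ZMod 2)^n`. -/
noncomputable def critNum {n : ℕ} (X : Set (Fin n → ZMod 2)) : ℕ :=
  sInf {c : ℕ | ∃ W : Submodule (ZMod 2) (Fin n → ZMod 2),
    Module.finrank (ZMod 2) W + c = n ∧ ∀ x ∈ X, x ∉ W}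

/-- Vectors with first coordinate `0` and Hamming weight greater than `n - c`. -/
def Xn (n c : ℕ) : Set (Fin (n + 1) → ZMod 2) :=
  {x | x 0 = 0 ∧ n - c < hWt x}

/-- Vectors with first coordinate `1` and Hamming weight at most `(n - c)/2`. -/
def Yn (n c : ℕ) : Set (Fin (n + 1) → ZMod 2) :=
  {y | y 0 = 1 ∧ 2 * hWt y ≤ n - c}

-- ZMod 2 helpers
lemma zmod2_cases (a : ZMod 2) : a = 0 ∨ a = 1 := by revert a; decide

lemma zmod2_ne_zero_iff (a : ZMod 2) : a ≠ 0 ↔ a = 1 := by revert a; decide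

lemma zmod2_add_self (a : ZMod 2) : a + a = 0 := by revert a; decide

lemma hWt_le {m : ℕ} (x : Fin m → ZMod 2) : hWt x ≤ m := by
  simpa [hWt] using Finset.card_filter_le Finset.univ fun i => x i ≠ 0

lemma hWt_add_le {m : ℕ} (x y : Fin m → ZMod 2) : hWt (x + y) ≤ hWt x + hWt y := by
  refine le_trans (le_trans (Finset.card_le_card ?_) (Finset.card_union_le _ _)) le_rfl
  intro i hi
  simp only [Finset.mem_filter, Finset.mem_univ, true_and, Finset.mem_union, Pi.add_apply] at hi ⊢
  by_contra hc
  push_neg at hc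
  rw [hc.1, hc.2] at hi
  exact hi (by decide)

lemma hWt_zero_count {m : ℕ} (z : Fin m → ZMod 2) :
    (Finset.univ.filter fun i => z i = 0).card = m - hWt z := by
  have h := Finset.card_filter_add_card_filter_not
    (s := (Finset.univ : Finset (Fin m))) (p := fun i => z i = 0)
  have h2 : (Finset.univ.filter fun i => ¬ z i = 0).card = hWt z := rfl
  have h3 := hWt_le z
  simp only [Finset.card_univ, Fintype.card_fin] at h
  omega

lemma hWt_add_le' {m : ℕ} (x y : Fin m → ZMod 2) :
    hWt (x + y) ≤ (m - hWt x) + (m - hWt y) := by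
  rw [← hWt_zero_count x, ← hWt_zero_count y]
  refine le_trans (Finset.card_le_card ?_) (Finset.card_union_le _ _)
  intro i hi
  simp only [Finset.mem_filter, Finset.mem_univ, true_and, Finset.mem_union, Pi.add_apply] at hi ⊢
  by_contra hc
  push_neg at hc
  rw [(zmod2_ne_zero_iff _).1 hc.1, (zmod2_ne_zero_iff _).1 hc.2] at hi
  exact hi (by decide)

lemma hWt_succ {n : ℕ} (x : Fin (n+1) → ZMod 2) :
    hWt x = (if x 0 ≠ 0 then 1 else 0) + hWt (Fin.tail x) := by
  rw [hWt, Finset.card_filter, Fin.sum_univ_succ, hWt, Finset.card_filter]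
  rfl

lemma card_hWt_eq (n w : ℕ) :
    ((Finset.univ : Finset (Fin n → ZMod 2)).filter fun z => hWt z = w).card = n.choose w := by
  rw [show n.choose w = (Finset.powersetCard w (Finset.univ : Finset (Fin n))).card from by
    rw [Finset.card_powersetCard, Finset.card_univ, Fintype.card_fin]]
  apply Finset.card_nbij' (i := fun z => Finset.univ.filter fun i => z i = 1)
    (j := fun S i => if i ∈ S then 1 else 0)
  · intro z hz
    simp only [Finset.mem_coe, Finset.mem_filter, Finset.mem_univ, true_and] at hz
    rw [Finset.mem_coe, Finset.mem_powersetCard]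
    refine ⟨Finset.subset_univ _, ?_⟩
    rw [← hz, hWt]
    congr 1
    apply Finset.filter_congr
    intro i _
    exact (zmod2_ne_zero_iff (z i)).symm
  · intro S hS
    simp only [Finset.mem_coe, Finset.mem_powersetCard] at hS
    simp only [Finset.mem_coe, Finset.mem_filter, Finset.mem_univ, true_and]
    rw [hWt, ← hS.2]
    congr 1
    ext i
    simp only [Finset.mem_filter, Finset.mem_univ, true_and]
    by_cases h : i ∈ S <;> simp [h]
  · intro z _
    funext i
    rcases zmod2_cases (z i) with h | h <;> simp [h]
  · intro S _
    ext i
    simp only [Finset.mem_filter, Finset.mem_univ, true_and]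
    by_cases h : i ∈ S <;> simp [h]

lemma sum_split (n t : ℕ) (h : 2*t + 1 ≤ n) :
    2 * (∑ w ∈ Finset.range (t+1), n.choose w)
      + ∑ w ∈ Finset.Ico (t+1) (n-t), n.choose w = 2^n := by
  have e1 : ∑ w ∈ Finset.range (n+1), n.choose w = 2^n := Nat.sum_range_choose n
  rw [Finset.range_eq_Ico] at e1
  rw [← Finset.sum_Ico_consecutive _ (by omega : 0 ≤ t+1) (by omega : t+1 ≤ n+1)] at e1
  rw [← Finset.sum_Ico_consecutive _ (by omega : t+1 ≤ n-t) (by omega : n-t ≤ n+1)] at e1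
  have e2 : ∑ w ∈ Finset.Ico (n-t) (n+1), n.choose w = ∑ w ∈ Finset.Ico 0 (t+1), n.choose w := by
    apply Finset.sum_nbij' (i := fun w => n - w) (j := fun w => n - w)
    · intro a ha; simp only [Finset.mem_Ico] at *; omega
    · intro a ha; simp only [Finset.mem_Ico] at *; omega
    · intro a ha; simp only [Finset.mem_Ico] at ha; omega
    · intro a ha; simp only [Finset.mem_Ico] at ha; omega
    · intro a ha
      simp only [Finset.mem_Ico] at ha
      exact (Nat.choose_symm (by omega : a ≤ n)).symm
  rw [Finset.range_eq_Ico]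
  omega

lemma centralBinom_sq_bound (m : ℕ) : Nat.centralBinom m ^ 2 * (2*m+1) ≤ 16 ^ m := by
  induction m with
  | zero => simp [Nat.centralBinom]
  | succ k ih =>
    have key := Nat.succ_mul_centralBinom_succ k
    have hpos : 0 < (k+1)^2 := by positivity
    apply Nat.le_of_mul_le_mul_left _ hpos
    calc (k+1)^2 * (Nat.centralBinom (k+1) ^ 2 * (2*(k+1)+1))
        = ((k+1) * Nat.centralBinom (k+1))^2 * (2*k+3) := by ring
      _ = (2*(2*k+1)*Nat.centralBinom k)^2 * (2*k+3) := by rw [key]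
      _ = (Nat.centralBinom k ^2 * (2*k+1)) * (4 * (2*k+1) * (2*k+3)) := by ring
      _ ≤ 16^k * (4 * (2*k+1) * (2*k+3)) := Nat.mul_le_mul_right _ ih
      _ ≤ 16^k * (16 * (k+1)^2) := Nat.mul_le_mul_left _ (by nlinarith)
      _ = (k+1)^2 * 16^(k+1) := by ring

lemma choose_half_sq_bound (n : ℕ) : (n.choose (n/2))^2 * n ≤ 4 * 4 ^ n := by
  have h1 : n.choose (n/2) ≤ Nat.centralBinom ((n+1)/2) := by
    rcases Nat.even_or_odd n with ⟨m, hm⟩ | ⟨m, hm⟩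
    · subst hm
      have h2 : (m+m)/2 = m := by omega
      have h3 : (m+m+1)/2 = m := by omega
      rw [h2, h3, Nat.centralBinom]
      apply Nat.le_of_eq
      congr 1
      omega
    · subst hm
      have h2 : (2*m+1)/2 = m := by omega
      have h3 : (2*m+1+1)/2 = m+1 := by omega
      rw [h2, h3, Nat.centralBinom]
      have h4 : 2*(m+1) = (2*m+1)+1 := by omega
      rw [h4]
      have h5 : m + 1 = m + 1 := rfl
      rw [show (2*m+1)+1 = (2*m+1)+1 from rfl]
      calc (2*m+1).choose m ≤ (2*m+1).choose m + (2*m+1).choose (m+1) := Nat.le_add_right _ _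
        _ = ((2*m+1)+1).choose (m+1) := (Nat.choose_succ_succ _ _).symm
  have h2 := centralBinom_sq_bound ((n+1)/2)
  have h3 : n.choose (n/2)^2 * n ≤ Nat.centralBinom ((n+1)/2)^2 * (2*((n+1)/2)+1) :=
    Nat.mul_le_mul (Nat.pow_le_pow_left h1 2) (by omega)
  calc n.choose (n/2)^2 * n ≤ Nat.centralBinom ((n+1)/2)^2 * (2*((n+1)/2)+1) := h3
    _ ≤ 16^((n+1)/2) := h2
    _ ≤ 4 * 4^n := by
        have e : (16:ℕ) = 4^2 := by norm_num
        rw [e, ← pow_mul]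
        calc (4:ℕ)^(2*((n+1)/2)) ≤ 4^(n+1) := Nat.pow_le_pow_right (by norm_num) (by omega)
          _ = 4 * 4^n := by rw [pow_succ]; ring

section Pivot

variable {m : ℕ}

def resMap (U : Submodule (ZMod 2) (Fin m → ZMod 2)) (T : Finset (Fin m)) :
    U →ₗ[ZMod 2] (↥T → ZMod 2) :=
  (LinearMap.funLeft (ZMod 2) (ZMod 2) (fun i : ↥T => (i : Fin m))).comp U.subtype

lemma resMap_apply (U : Submodule (ZMod 2) (Fin m → ZMod 2)) (T : Finset (Fin m))
    (u : U) (i : ↥T) : resMap U T u i = (u : Fin m → ZMod 2) i := rfl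

lemma resMap_inj_iff {U : Submodule (ZMod 2) (Fin m → ZMod 2)} {T : Finset (Fin m)} :
    Function.Injective (resMap U T) ↔
      ∀ u : U, (∀ i ∈ T, (u : Fin m → ZMod 2) i = 0) → u = 0 := by
  rw [← LinearMap.ker_eq_bot, LinearMap.ker_eq_bot']
  constructor
  · intro h u hu
    exact h u (funext fun i => hu i i.2)
  · intro h u hu
    exact h u (fun i hi => congrFun hu ⟨i, hi⟩)

lemma pivot_step {U : Submodule (ZMod 2) (Fin m → ZMod 2)} {T : Finset (Fin m)}
    (hinj : Function.Injective (resMap U T))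
    (hsurj : ¬ Function.Surjective (resMap U T)) :
    ∃ j ∈ T, Function.Injective (resMap U (T.erase j)) := by
  by_contra hc
  push_neg at hc
  have hU : ∀ j ∈ T, ∃ u : U, u ≠ 0 ∧ ∀ i ∈ T, i ≠ j → (u : Fin m → ZMod 2) i = 0 := by
    intro j hj
    have h1 := hc j hj
    rw [resMap_inj_iff] at h1
    push_neg at h1
    obtain ⟨u, hu, hune⟩ := h1
    exact ⟨u, hune, fun i hi hij => hu i (Finset.mem_erase.2 ⟨hij, hi⟩)⟩
  choose! u hu0 huz using hU
  have hdiag : ∀ j ∈ T, ((u j : Fin m → ZMod 2)) j ≠ 0 := by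
    intro j hj h0
    apply hu0 j hj
    apply resMap_inj_iff.1 hinj (u j)
    intro i hi
    by_cases hij : i = j
    · subst hij; exact h0
    · exact huz j hj i hi hij
  have hli : LinearIndependent (ZMod 2) (fun j : ↥T => u j) := by
    rw [Fintype.linearIndependent_iff]
    intro g hg j
    have h1 := congrArg (fun v : U => (v : Fin m → ZMod 2) (j : Fin m)) hg
    simp only [AddSubmonoidClass.coe_finset_sum, Finset.sum_apply, Submodule.coe_smul,
      Pi.smul_apply, smul_eq_mul, ZeroMemClass.coe_zero, Pi.zero_apply] at h1
    rw [Finset.sum_eq_single j] at h1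
    · have hd := hdiag (j : Fin m) j.2
      have hmul : ∀ a b : ZMod 2, b ≠ 0 → a * b = 0 → a = 0 := by decide
      exact hmul _ _ hd h1
    · intro i _ hij
      rw [huz (i : Fin m) i.2 (j : Fin m) j.2 (fun hh => hij (Subtype.ext hh).symm), mul_zero]
    · intro hj'
      exact absurd (Finset.mem_univ j) hj'
  have hcard := hli.fintype_card_le_finrank
  rw [Fintype.card_coe] at hcard
  have hlt : Module.finrank (ZMod 2) U < T.card := by
    have hr : LinearMap.range (resMap U T) < ⊤ :=
      lt_top_iff_ne_top.2 (fun h => hsurj (LinearMap.range_eq_top.1 h))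
    have h2 := Submodule.finrank_lt hr.ne
    rw [Module.finrank_fintype_fun_eq_card, Fintype.card_coe] at h2
    have he : Module.finrank (ZMod 2) ↥(LinearMap.range (resMap U T))
        = Module.finrank (ZMod 2) U := LinearMap.finrank_range_of_inj hinj
    omega
  omega

lemma pivot_aux (U : Submodule (ZMod 2) (Fin m → ZMod 2)) :
    ∀ (k : ℕ) (T : Finset (Fin m)), T.card = k →
    Function.Injective (resMap U T) →
    ∃ P ⊆ T, Function.Bijective (resMap U P) := by
  intro k
  induction k with
  | zero =>
    intro T hT hinj
    refine ⟨T, Finset.Subset.refl _, hinj, fun g => ⟨0, funext fun i => ?_⟩⟩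
    exact absurd (Finset.card_pos.2 ⟨(i : Fin m), i.2⟩ : 0 < T.card) (by omega)
  | succ k ih =>
    intro T hT hinj
    by_cases hs : Function.Surjective (resMap U T)
    · exact ⟨T, Finset.Subset.refl _, hinj, hs⟩
    · obtain ⟨j, hjT, hinj'⟩ := pivot_step hinj hs
      obtain ⟨P, hP, hbij⟩ := ih (T.erase j)
        (by rw [Finset.card_erase_of_mem hjT, hT]; rfl) hinj'
      exact ⟨P, hP.trans (Finset.erase_subset _ _), hbij⟩

lemma pivot (U : Submodule (ZMod 2) (Fin m → ZMod 2)) :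
    ∃ P : Finset (Fin m), P.card = Module.finrank (ZMod 2) U ∧
      ∀ g : Fin m → ZMod 2, ∃ u ∈ U, ∀ i ∈ P, u i = g i := by
  have hinj : Function.Injective (resMap U Finset.univ) := by
    rw [resMap_inj_iff]
    intro u hu
    exact Subtype.ext (funext fun i => hu i (Finset.mem_univ i))
  obtain ⟨P, -, hbij⟩ := pivot_aux U Finset.univ.card Finset.univ rfl hinj
  have hcard : P.card = Module.finrank (ZMod 2) U := by
    have e := LinearEquiv.ofBijective (resMap U P) hbij
    rw [← e.symm.finrank_eq, Module.finrank_fintype_fun_eq_card, Fintype.card_coe]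
  refine ⟨P, hcard, fun g => ?_⟩
  obtain ⟨v, hv⟩ := hbij.2 (fun i => g i)
  exact ⟨v, v.2, fun i hi => congrFun hv ⟨i, hi⟩⟩

end Pivot

lemma upper_mem (c n : ℕ) (hcn : c + 1 ≤ n) :
    ∃ W : Submodule (ZMod 2) (Fin (n+1) → ZMod 2),
      Module.finrank (ZMod 2) W + (c+1) = n+1 ∧ ∀ x ∈ Xn n c ∪ Yn n c, x ∉ W := by
  have hle : c + 1 ≤ n + 1 := by omega
  set L := LinearMap.funLeft (ZMod 2) (ZMod 2) (Fin.castLE hle) with hL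
  refine ⟨LinearMap.ker L, ?_, ?_⟩
  · have hsurj : Function.Surjective L :=
      LinearMap.funLeft_surjective_of_injective _ _ _ (Fin.castLE_injective hle)
    have h1 := LinearMap.finrank_range_add_finrank_ker L
    rw [LinearMap.range_eq_top.2 hsurj, finrank_top, Module.finrank_fintype_fun_eq_card,
      Module.finrank_fintype_fun_eq_card, Fintype.card_fin, Fintype.card_fin] at h1
    omega
  · rintro x (hx | hx) hxW
    · have hz : ∀ i : Fin (c+1), x (Fin.castLE hle i) = 0 :=
        fun i => congrFun (LinearMap.mem_ker.1 hxW) i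
      have hsub : (Finset.univ.filter fun i : Fin (n+1) => x i ≠ 0) ⊆
          Finset.univ.filter fun i : Fin (n+1) => ¬ (i : ℕ) < c + 1 := by
        intro i hi
        simp only [Finset.mem_filter, Finset.mem_univ, true_and] at hi ⊢
        intro hlt
        apply hi
        have he : Fin.castLE hle ⟨(i : ℕ), hlt⟩ = i := by
          apply Fin.ext; simp
        rw [← he]
        exact hz ⟨(i : ℕ), hlt⟩
      have hcard : (Finset.univ.filter fun i : Fin (n+1) => (i : ℕ) < c + 1).card = c + 1 := by
        have heq : (Finset.univ.filter fun i : Fin (n+1) => (i : ℕ) < c + 1).card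
            = (Finset.univ : Finset (Fin (c+1))).card := by
          apply Finset.card_nbij' (i := fun i : Fin (n+1) =>
              (⟨(i : ℕ) % (c+1), Nat.mod_lt _ (by omega)⟩ : Fin (c+1)))
            (j := fun i => Fin.castLE hle i)
          · intro a _
            exact Finset.mem_univ _
          · intro a _
            simp only [Finset.mem_coe, Finset.mem_filter, Finset.mem_univ, true_and, Fin.coe_castLE]
            exact a.2
          · intro a ha
            simp only [Finset.mem_coe, Finset.mem_filter, Finset.mem_univ, true_and] at ha
            apply Fin.ext
            simp [Nat.mod_eq_of_lt ha]
          · intro a _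
            apply Fin.ext
            simp [Nat.mod_eq_of_lt a.2]
        rw [heq, Finset.card_univ, Fintype.card_fin]
      have htot := Finset.card_filter_add_card_filter_not
        (s := (Finset.univ : Finset (Fin (n+1)))) (p := fun i : Fin (n+1) => (i : ℕ) < c + 1)
      have hwt : hWt x ≤ (Finset.univ.filter fun i : Fin (n+1) => ¬ (i : ℕ) < c + 1).card :=
        Finset.card_le_card hsub
      simp only [Finset.card_univ, Fintype.card_fin] at htot
      have := hx.2
      omega
    · have hz := congrFun (LinearMap.mem_ker.1 hxW) (0 : Fin (c+1))
      simp only [hL, LinearMap.funLeft_apply, Pi.zero_apply] at hz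
      have he : Fin.castLE hle (0 : Fin (c+1)) = (0 : Fin (n+1)) := by
        apply Fin.ext; simp
      rw [he, hx.1] at hz
      exact (by decide : (1 : ZMod 2) ≠ 0) hz

lemma no_small (c n : ℕ) (hn : 3*c + 2 ≤ n) (k : ℕ) (hk : k ≤ c)
    (W : Submodule (ZMod 2) (Fin (n+1) → ZMod 2))
    (hrank : Module.finrank (ZMod 2) W + k = n + 1)
    (hav : ∀ x ∈ Xn n c ∪ Yn n c, x ∉ W) : False := by
  set pr := (LinearMap.proj (R := ZMod 2) (φ := fun _ : Fin (n+1) => ZMod 2) 0) with hpr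
  set K := LinearMap.ker pr with hK
  have hKmem : ∀ v : Fin (n+1) → ZMod 2, v ∈ K ↔ v 0 = 0 := by
    intro v
    simp [hK, LinearMap.mem_ker, hpr]
  have hKrank : Module.finrank (ZMod 2) K = n := by
    have hsurj : Function.Surjective pr := fun a => ⟨Pi.single 0 a, by simp [hpr]⟩
    have h1 := LinearMap.finrank_range_add_finrank_ker pr
    rw [LinearMap.range_eq_top.2 hsurj, finrank_top, Module.finrank_self,
      Module.finrank_fintype_fun_eq_card, Fintype.card_fin] at h1
    rw [← hK] at h1
    omega
  set W0 := W ⊓ K with hW0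
  have hW0le : n - c ≤ Module.finrank (ZMod 2) W0 := by
    have h2 := Submodule.finrank_sup_add_finrank_inf_eq W K
    rw [← hW0] at h2
    have h3 : Module.finrank (ZMod 2) ↥(W ⊔ K) ≤ n + 1 := by
      have h4 := Submodule.finrank_le (W ⊔ K)
      rwa [Module.finrank_fintype_fun_eq_card, Fintype.card_fin] at h4
    omega
  obtain ⟨P, hPcard, hPsurj⟩ := pivot W0
  obtain ⟨x, hxW0, hx1⟩ := hPsurj (fun _ => 1)
  have hxK : x ∈ K := (Submodule.mem_inf.1 hxW0).2
  have hxW : x ∈ W := (Submodule.mem_inf.1 hxW0).1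
  have hxwt : P.card ≤ hWt x := by
    apply Finset.card_le_card
    intro i hi
    simp only [Finset.mem_filter, Finset.mem_univ, true_and]
    rw [hx1 i hi]
    decide
  by_cases hbig : n - c < P.card
  · exact hav x (Or.inl ⟨(hKmem x).1 hxK, by omega⟩) hxW
  · have hPc : P.card = n - c := by omega
    have hWK : ¬ W ≤ K := by
      intro hle
      have heq : W0 = W := by rw [hW0, inf_eq_left.2 hle]
      rw [heq] at hPcard
      omega
    obtain ⟨w1, hw1W, hw1K⟩ := SetLike.not_le_iff_exists.1 hWK
    have hw10 : w1 0 = 1 := by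
      rcases zmod2_cases (w1 0) with h | h
      · exact absurd ((hKmem w1).2 h) hw1K
      · exact h
    obtain ⟨u, huW0, hu⟩ := hPsurj w1
    have huK : u ∈ K := (Submodule.mem_inf.1 huW0).2
    have huW : u ∈ W := (Submodule.mem_inf.1 huW0).1
    have hyW : w1 + u ∈ W := W.add_mem hw1W huW
    have hy0 : (w1 + u) 0 = 1 := by
      have hu0 : u 0 = 0 := (hKmem u).1 huK
      simp [Pi.add_apply, hw10, hu0]
    have hywt : hWt (w1 + u) ≤ c + 1 := by
      have hsub : (Finset.univ.filter fun i => (w1 + u) i ≠ 0) ⊆ Pᶜ := by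
        intro i hi
        simp only [Finset.mem_filter, Finset.mem_univ, true_and] at hi
        rw [Finset.mem_compl]
        intro hiP
        apply hi
        rw [Pi.add_apply, hu i hiP]
        exact zmod2_add_self _
      have h5 := Finset.card_le_card hsub
      rw [Finset.card_compl, Fintype.card_fin] at h5
      have h6 : hWt (w1 + u) = (Finset.univ.filter fun i => (w1 + u) i ≠ 0).card := rfl
      omega
    exact hav (w1 + u) (Or.inr ⟨hy0, by omega⟩) hyW

lemma Yn_card_aux (n c : ℕ) (h : c + 2 ≤ n) :
    ((Finset.univ : Finset (Fin (n+1) → ZMod 2)).filter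
      fun y => y 0 = 1 ∧ 2 * hWt y ≤ n - c).card =
      ((Finset.univ : Finset (Fin n → ZMod 2)).filter fun z => hWt z ≤ ((n-c-2)/2)).card := by
  apply Finset.card_nbij' (i := Fin.tail) (j := fun z => Fin.cons 1 z)
  · intro y hy
    simp only [Finset.mem_coe, Finset.mem_filter, Finset.mem_univ, true_and] at hy ⊢
    have hw := hWt_succ y
    rw [hy.1, if_pos (by decide : (1 : ZMod 2) ≠ 0)] at hw
    omega
  · intro z hz
    simp only [Finset.mem_coe, Finset.mem_filter, Finset.mem_univ, true_and] at hz ⊢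
    have hw := hWt_succ (Fin.cons 1 z)
    rw [Fin.cons_zero, Fin.tail_cons, if_pos (by decide : (1 : ZMod 2) ≠ 0)] at hw
    refine ⟨Fin.cons_zero _ _, by omega⟩
  · intro y hy
    simp only [Finset.mem_coe, Finset.mem_filter, Finset.mem_univ, true_and] at hy
    rw [← hy.1]
    exact Fin.cons_self_tail y
  · intro z _
    exact Fin.tail_cons _ _

lemma Yn_card (n c : ℕ) (h : c + 2 ≤ n) :
    (Yn n c).ncard = ∑ w ∈ Finset.range ((n-c-2)/2 + 1), n.choose w := by
  have h1 : Yn n c = ↑((Finset.univ : Finset (Fin (n+1) → ZMod 2)).filter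
      fun y => y 0 = 1 ∧ 2 * hWt y ≤ n - c) := by
    ext y
    simp [Yn]
  rw [h1, Set.ncard_coe_finset]
  clear h1
  rw [Yn_card_aux n c h]
  rw [Finset.card_eq_sum_card_fiberwise (f := hWt) (t := Finset.range ((n-c-2)/2+1))
    (fun z hz => Finset.mem_range.2 (by
      simp only [Finset.mem_coe, Finset.mem_filter, Finset.mem_univ, true_and] at hz; omega))]
  apply Finset.sum_congr rfl
  intro w hw
  simp only [Finset.mem_range] at hw
  rw [Finset.filter_filter]
  have heq : (Finset.univ.filter fun z : Fin n → ZMod 2 => hWt z ≤ (n-c-2)/2 ∧ hWt z = w) =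
      (Finset.univ.filter fun z => hWt z = w) := by
    apply Finset.filter_congr
    intro z _
    constructor
    · exact And.right
    · intro hzw
      exact ⟨by omega, hzw⟩
  rw [heq, card_hWt_eq]

lemma hWt_delta {m : ℕ} (i : Fin m) :
    hWt (fun j => if i = j then (1 : ZMod 2) else 0) = 1 := by
  rw [hWt]
  have : (Finset.univ.filter fun j => (if i = j then (1 : ZMod 2) else 0) ≠ 0) = {i} := by
    ext j
    simp only [Finset.mem_filter, Finset.mem_univ, true_and, Finset.mem_singleton]
    by_cases h : i = j
    · simp [h, eq_comm]
    · simp [h, Ne.symm h]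
  rw [this, Finset.card_singleton]

lemma hWt_delta_add {m : ℕ} (i k : Fin m) (hik : i ≠ k) :
    hWt ((fun j => if i = j then (1 : ZMod 2) else 0) +
      (fun j => if k = j then (1 : ZMod 2) else 0)) = 2 := by
  rw [hWt]
  have : (Finset.univ.filter fun j =>
      ((fun j => if i = j then (1 : ZMod 2) else 0) +
        (fun j => if k = j then (1 : ZMod 2) else 0)) j ≠ 0) = {i, k} := by
    ext j
    simp only [Finset.mem_filter, Finset.mem_univ, true_and, Finset.mem_insert,
      Finset.mem_singleton, Pi.add_apply]
    by_cases h1 : i = j <;> by_cases h2 : k = j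
    · exact absurd (h1.trans h2.symm) hik
    · simp [h1, h2, eq_comm]
    · simp [h1, h2, eq_comm]
    · simp [h1, h2, Ne.symm h1, Ne.symm h2]
  rw [this, Finset.card_insert_of_notMem (by simpa using hik), Finset.card_singleton]

lemma span_top (n c : ℕ) (hn : c + 4 ≤ n) :
    Submodule.span (ZMod 2) (Xn n c ∪ Yn n c) = ⊤ := by
  rw [eq_top_iff]
  intro v _
  rw [pi_eq_sum_univ v]
  apply Submodule.sum_mem
  intro i _
  apply Submodule.smul_mem
  have hd0 : (fun j => if (0 : Fin (n+1)) = j then (1 : ZMod 2) else 0) ∈ Yn n c := by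
    refine ⟨by simp, ?_⟩
    rw [hWt_delta]
    omega
  by_cases hi : i = 0
  · subst hi
    exact Submodule.subset_span (Or.inr hd0)
  · have hdi : ((fun j => if (0 : Fin (n+1)) = j then (1 : ZMod 2) else 0) +
        (fun j => if i = j then (1 : ZMod 2) else 0)) ∈ Yn n c := by
      constructor
      · simp [Pi.add_apply, hi]
      · rw [hWt_delta_add 0 i (fun h => hi h.symm)]
        omega
    have heq : (fun j => if i = j then (1 : ZMod 2) else 0) =
        (fun j => if (0 : Fin (n+1)) = j then (1 : ZMod 2) else 0) +
        ((fun j => if (0 : Fin (n+1)) = j then (1 : ZMod 2) else 0) +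
          (fun j => if i = j then (1 : ZMod 2) else 0)) := by
      funext j
      simp only [Pi.add_apply]
      generalize (if (0 : Fin (n+1)) = j then (1 : ZMod 2) else 0) = a
      generalize (if i = j then (1 : ZMod 2) else 0) = b
      revert a b
      decide
    rw [heq]
    exact Submodule.add_mem _ (Submodule.subset_span (Or.inr hd0))
      (Submodule.subset_span (Or.inr hdi))

lemma triangle_free (n c : ℕ) (hn : 3*c + 2 ≤ n) :
    TriangleFree (Xn n c ∪ Yn n c) := by
  have key3 : ∀ a b d : ZMod 2, a + b + d = 0 → d = a + b := by decide
  have key3' : ∀ a b d : ZMod 2, a + b + d = 0 → a = b + d := by decide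
  have key3'' : ∀ a b d : ZMod 2, a + b + d = 0 → b = a + d := by decide
  rintro x hx y hy z hz - - - h
  have hzxy : z = x + y := funext fun i => by
    have h1 := congrFun h i
    simp only [Pi.add_apply, Pi.zero_apply] at h1
    exact key3 _ _ _ h1
  have hxyz : x = y + z := funext fun i => by
    have h1 := congrFun h i
    simp only [Pi.add_apply, Pi.zero_apply] at h1
    exact key3' _ _ _ h1
  have hyxz : y = x + z := funext fun i => by
    have h1 := congrFun h i
    simp only [Pi.add_apply, Pi.zero_apply] at h1
    exact key3'' _ _ _ h1
  have h0 := congrFun h 0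
  simp only [Pi.add_apply, Pi.zero_apply] at h0
  rcases hx with hx | hx <;> rcases hy with hy | hy <;> rcases hz with hz | hz
  · -- XXX
    have hw := hWt_add_le' x y
    rw [← hzxy] at hw
    have l1 := hWt_le x
    have l2 := hWt_le y
    have e1 := hx.2
    have e2 := hy.2
    have e3 := hz.2
    omega
  · -- XXY : parity
    rw [hx.1, hy.1, hz.1] at h0
    exact (by decide : ¬ ((0 : ZMod 2) + 0 + 1 = 0)) h0
  · -- XYX
    rw [hx.1, hy.1, hz.1] at h0
    exact (by decide : ¬ ((0 : ZMod 2) + 1 + 0 = 0)) h0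
  · -- XYY : x = y + z
    have hw := hWt_add_le y z
    rw [← hxyz] at hw
    have e1 := hx.2
    have e2 := hy.2
    have e3 := hz.2
    omega
  · -- YXX
    rw [hx.1, hy.1, hz.1] at h0
    exact (by decide : ¬ ((1 : ZMod 2) + 0 + 0 = 0)) h0
  · -- YXY : y = x + z
    have hw := hWt_add_le x z
    rw [← hyxz] at hw
    have e1 := hx.2
    have e2 := hy.2
    have e3 := hz.2
    omega
  · -- YYX : z = x + y
    have hw := hWt_add_le x y
    rw [← hzxy] at hw
    have e1 := hx.2
    have e2 := hy.2
    have e3 := hz.2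
    omega
  · -- YYY
    rw [hx.1, hy.1, hz.1] at h0
    exact (by decide : ¬ ((1 : ZMod 2) + 1 + 1 = 0)) h0


theorem stmt_4 (c : ℕ) (ε : ℝ) (hε : 0 < ε) :
    ∃ N : ℕ, ∀ n ≥ N,
      TriangleFree (Xn n c ∪ Yn n c) ∧
      (0 : Fin (n + 1) → ZMod 2) ∉ Xn n c ∪ Yn n c ∧
      Submodule.span (ZMod 2) (Xn n c ∪ Yn n c) = ⊤ ∧
      critNum (Xn n c ∪ Yn n c) = c + 1 ∧
      ((1 / 4 : ℝ) - ε) * 2 ^ (n + 1) ≤ ((Xn n c ∪ Yn n c).ncard : ℝ) := by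
  obtain ⟨N0, hN0⟩ := exists_nat_gt (((c : ℝ) + 2)^2 / (4 * ε^2))
  refine ⟨max (3*c+12) (N0+1), fun n hn => ?_⟩
  have hn1 : 3*c+12 ≤ n := le_trans (le_max_left _ _) hn
  have hn2 : N0 + 1 ≤ n := le_trans (le_max_right _ _) hn
  refine ⟨triangle_free n c (by omega), ?_, span_top n c (by omega), ?_, ?_⟩
  · rintro (h | h)
    · have h0 : hWt (0 : Fin (n+1) → ZMod 2) = 0 := by simp [hWt]
      have h2 := h.2
      omega
    · exact (by decide : (0 : ZMod 2) ≠ 1) h.1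
  · unfold critNum
    obtain ⟨W, hW1, hW2⟩ := upper_mem c n (by omega)
    have hmem : (c+1) ∈ {k : ℕ | ∃ W : Submodule (ZMod 2) (Fin (n+1) → ZMod 2),
        Module.finrank (ZMod 2) W + k = n+1 ∧ ∀ x ∈ Xn n c ∪ Yn n c, x ∉ W} := ⟨W, hW1, hW2⟩
    apply le_antisymm
    · exact Nat.sInf_le hmem
    · apply le_csInf ⟨_, hmem⟩
      intro k hk
      by_contra hlt
      push_neg at hlt
      obtain ⟨W', hW'1, hW'2⟩ := hk
      exact absurd (no_small c n (by omega) k (by omega) W' hW'1 hW'2) not_false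
  · have hY := Yn_card n c (by omega)
    have hsplit := sum_split n ((n-c-2)/2) (by omega)
    have hmid : ∑ w ∈ Finset.Ico ((n-c-2)/2+1) (n-(n-c-2)/2), n.choose w
        ≤ (c+2) * (n.choose (n/2)) := by
      calc ∑ w ∈ Finset.Ico ((n-c-2)/2+1) (n-(n-c-2)/2), n.choose w
          ≤ (Finset.Ico ((n-c-2)/2+1) (n-(n-c-2)/2)).card • (n.choose (n/2)) :=
            Finset.sum_le_card_nsmul _ _ _ (fun w _ => Nat.choose_le_middle w n)
        _ = (n-(n-c-2)/2 - ((n-c-2)/2+1)) * (n.choose (n/2)) := by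
            rw [Nat.card_Ico, smul_eq_mul]
        _ ≤ (c+2) * (n.choose (n/2)) := Nat.mul_le_mul_right _ (by omega)
    have hsub : (Yn n c).ncard ≤ (Xn n c ∪ Yn n c).ncard :=
      Set.ncard_le_ncard Set.subset_union_right (Set.toFinite _)
    have hS : ∑ w ∈ Finset.range ((n-c-2)/2+1), n.choose w ≤ (Xn n c ∪ Yn n c).ncard := by
      rw [← hY]; exact hsub
    have hge : ((∑ w ∈ Finset.range ((n-c-2)/2+1), n.choose w : ℕ) : ℝ)
        ≤ ((Xn n c ∪ Yn n c).ncard : ℝ) := by exact_mod_cast hS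
    have h2S : 2*((∑ w ∈ Finset.range ((n-c-2)/2+1), n.choose w : ℕ) : ℝ)
        + ((∑ w ∈ Finset.Ico ((n-c-2)/2+1) (n-(n-c-2)/2), n.choose w : ℕ) : ℝ) = 2^n := by
      exact_mod_cast hsplit
    have hnR : (1:ℝ) ≤ (n:ℝ) := by exact_mod_cast (by omega : 1 ≤ n)
    have hCmid : ((n.choose (n/2) : ℝ))^2 * n ≤ 4 * 4^n := by
      exact_mod_cast choose_half_sq_bound n
    have h4n : (4:ℝ)^n = (2^n)^2 := by
      rw [show (4:ℝ) = 2^2 by norm_num, ← pow_mul, mul_comm, pow_mul]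
    have hNn : ((c:ℝ)+2)^2 ≤ 4*ε^2*n := by
      have h1 : ((c:ℝ)+2)^2/(4*ε^2) < N0 := hN0
      have h2 : (N0:ℝ) ≤ n := by exact_mod_cast (by omega : N0 ≤ n)
      have h3 : (0:ℝ) < 4*ε^2 := by positivity
      calc ((c:ℝ)+2)^2 = ((c:ℝ)+2)^2/(4*ε^2)*(4*ε^2) := by field_simp
        _ ≤ (n:ℝ)*(4*ε^2) := mul_le_mul_of_nonneg_right (by linarith) (le_of_lt h3)
        _ = 4*ε^2*n := by ring
    have hnpos : (0:ℝ) < n := by linarith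
    have hne : (n:ℝ) ≠ 0 := ne_of_gt hnpos
    have hsq2 : (((c:ℝ)+2)*(n.choose (n/2) : ℝ))^2 ≤ (4*ε*2^n)^2 := by
      have e1 : ((n.choose (n/2) : ℝ))^2 ≤ 4*4^n/n := by
        rw [le_div_iff₀ hnpos]
        linarith
      calc (((c:ℝ)+2)*(n.choose (n/2):ℝ))^2 = ((c:ℝ)+2)^2 * ((n.choose (n/2):ℝ))^2 := by ring
        _ ≤ (4*ε^2*(n:ℝ)) * (4*4^n/(n:ℝ)) := by
            apply mul_le_mul hNn e1 (by positivity) (by positivity)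
        _ = 16*ε^2*4^n := by field_simp; ring
        _ = (4*ε*2^n)^2 := by rw [h4n]; ring
    have hfin : ((c:ℝ)+2)*(n.choose (n/2):ℝ) ≤ 4*ε*2^n :=
      le_of_pow_le_pow_left₀ (by norm_num) (by positivity) hsq2
    have hmidR : ((∑ w ∈ Finset.Ico ((n-c-2)/2+1) (n-(n-c-2)/2), n.choose w : ℕ) : ℝ)
        ≤ 4*ε*2^n := by
      have h5 : ((∑ w ∈ Finset.Ico ((n-c-2)/2+1) (n-(n-c-2)/2), n.choose w : ℕ) : ℝ)
          ≤ ((c:ℝ)+2)*(n.choose (n/2):ℝ) := by exact_mod_cast hmid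
      linarith
    have hpow : (2:ℝ)^(n+1) = 2*2^n := by ring
    rw [hpow]
    nlinarith [hge, h2S, hmidR]
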